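/- If G is a stepwise irregular graph (a simple graph in which for every edge uv, |deg(u) − deg(v)| = 1), then the number of edges of G is even. -/

import Mathlib

open SimpleGraph Finset

noncomputable def deg {V : Type*} (G : SimpleGraph V) (v : V) : ℕ := (G.neighborSet v).ncard

/-- A graph is stepwise irregular if for every edge the endpoint degrees differ by exactly 1. -/
def SI {V : Type*} (G : SimpleGraph V) : Prop :=
  ∀ u v, G.Adj u v → |(deg G u : ℤ) - (deg G v : ℤ)| = 1

theorem stmt_0 {V : Type*} [Fintype V] (G : SimpleGraph V) (hSI : SI G) :
    Even G.edgeSet.ncard := by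
  classical
  have hdeg : ∀ v, deg G v = G.degree v := by
    intro v
    rw [deg, Set.ncard_eq_toFinset_card', ← neighborFinset_def, card_neighborFinset_eq_degree]
  -- parity alternation
  have hpar : ∀ {u v}, G.Adj u v → (Odd (G.degree u) ↔ ¬ Odd (G.degree v)) := by
    intro u v h
    have h1 := hSI u v h
    rw [abs_eq (by norm_num : (0:ℤ) ≤ 1)] at h1
    rw [← hdeg, ← hdeg, Nat.odd_iff, Nat.odd_iff]
    omega
  have hE : G.edgeSet.ncard = G.edgeFinset.card := by
    rw [← coe_edgeFinset, Set.ncard_coe_finset]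
  rw [hE]
  set D : Finset G.Dart := univ.filter (fun d => Odd (G.degree d.fst)) with hD
  have hcardD : G.edgeFinset.card = D.card := by
    refine (Finset.card_bij (fun d _ => d.edge) ?_ ?_ ?_).symm
    · intro d hd; rw [mem_edgeFinset]; exact d.edge_mem
    · intro d₁ h₁ d₂ h₂ he
      rcases (dart_edge_eq_iff d₁ d₂).mp he with rfl | rfl
      · rfl
      · exfalso
        simp only [hD, mem_filter] at h₁ h₂
        exact (hpar d₂.adj).mp h₂.2 h₁.2
    · intro e he
      rw [mem_edgeFinset] at he
      induction e with
      | _ u v =>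
        by_cases hu : Odd (G.degree u)
        · exact ⟨⟨(u, v), he⟩, by simp [hD, hu], rfl⟩
        · have hv : Odd (G.degree v) := by
            by_contra hv
            exact hu ((hpar ((G.mem_edgeSet.mp he))).mpr hv)
          exact ⟨⟨(v, u), G.adj_symm (G.mem_edgeSet.mp he)⟩, by simp [hD, hv], Sym2.eq_swap⟩
  rw [hcardD]
  set S : Finset V := univ.filter (fun v => Odd (G.degree v)) with hS
  have hfib : D.card = ∑ v ∈ S, G.degree v := by
    rw [Finset.card_eq_sum_card_fiberwise (f := fun d : G.Dart => d.fst)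
      (t := S) (fun d hd => by simp only [hD, Finset.mem_coe, mem_filter] at hd; simp [hS, hd.2])]
    refine Finset.sum_congr rfl fun v hv => ?_
    rw [← dart_fst_fiber_card_eq_degree]
    congr 1
    simp only [hS, mem_filter, mem_univ, true_and] at hv
    ext d
    simp only [hD, mem_filter, mem_univ, true_and]
    constructor
    · rintro ⟨-, rfl⟩; rfl
    · rintro rfl; exact ⟨hv, rfl⟩
  rw [hfib]
  have hcS : Even S.card := G.even_card_odd_degree_vertices
  have hsum : ∑ v ∈ S, G.degree v % 2 = ∑ v ∈ S, 1 :=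
    Finset.sum_congr rfl (fun v hv => by
      simp only [hS, mem_filter] at hv
      rw [Nat.odd_iff.mp hv.2])
  rw [Nat.even_iff, Finset.sum_nat_mod, hsum, Finset.sum_const, smul_eq_mul, mul_one]
  exact Nat.even_iff.mp hcS
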